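/- Let X_1,...,X_l be i.i.d. exponential random variables with rate 1, and let a ∈ ℝ_{≥0}^l with a* = max_{i} a_i > 0. Set ā = (1/l)·Σ_{i=1}^l a_i and α = ā/a*. Then for every 0 ≤ ε ≤ ā, P[ Σ_{i=1}^{l} (ε − a_i)·X_i ≥ 0 ] ≤ (h_α(ε/ā))^l, where h_α(x) = x^α·((1/α + 1)/(1/α + x))^{α+1}. (Equivalently, since Y = X/(X_1+⋯+X_l) is uniformly distributed on the probability simplex, P[⟨a, Y⟩ ≤ ε] ≤ (h_α(ε/ā))^l.) -/

import Mathlib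

open scoped BigOperators ENNReal NNReal
open MeasureTheory ProbabilityTheory Set

lemma prod_rpow_sum {A : ℝ} (hA : 0 < A) (s : Finset ℕ) (c : ℕ → ℝ) :
    ∏ i ∈ s, A ^ (c i) = A ^ (∑ i ∈ s, c i) := by
  calc ∏ i ∈ s, A ^ (c i) = ∏ i ∈ s, Real.exp (Real.log A * c i) := by
        refine Finset.prod_congr rfl fun i _ => ?_
        rw [Real.rpow_def_of_pos hA]
    _ = Real.exp (∑ i ∈ s, Real.log A * c i) := by rw [Real.exp_sum]
    _ = A ^ (∑ i ∈ s, c i) := by rw [Real.rpow_def_of_pos hA, Finset.mul_sum]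

lemma exp_pdf_real (x : ℝ) :
    exponentialPDFReal 1 x = if 0 ≤ x then Real.exp (-x) else 0 := by
  simp [exponentialPDFReal, gammaPDFReal, Real.Gamma_one]

lemma expMGF {s : ℝ} (hs : s < 1) :
    Integrable (fun x => Real.exp (s * x)) (expMeasure 1) ∧
      ∫ x, Real.exp (s * x) ∂(expMeasure 1) = (1 - s)⁻¹ := by
  have hb : 0 < 1 - s := by linarith
  have hme : expMeasure 1 = volume.withDensity (exponentialPDF 1) := rfl
  -- density as an indicator function
  have hindfun : ∀ x : ℝ, exponentialPDFReal 1 x * Real.exp (s * x)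
      = Set.indicator (Ici (0:ℝ)) (fun x => Real.exp (-((1 - s) * x))) x := by
    intro x
    rw [exp_pdf_real, Set.indicator_apply]
    by_cases hx : 0 ≤ x
    · rw [if_pos hx, if_pos (mem_Ici.mpr hx), ← Real.exp_add]
      ring_nf
    · rw [if_neg hx, if_neg (by simpa using hx), zero_mul]
  have hIOn : IntegrableOn (fun x => Real.exp (-((1 - s) * x))) (Ici (0:ℝ)) := by
    rw [integrableOn_Ici_iff_integrableOn_Ioi]
    have := exp_neg_integrableOn_Ioi (0:ℝ) hb
    refine this.congr_fun (fun x _ => ?_) measurableSet_Ioi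
    ring_nf
  have hInd : Integrable (Set.indicator (Ici (0:ℝ)) (fun x => Real.exp (-((1 - s) * x)))) := by
    exact hIOn.integrable_indicator measurableSet_Ici
  have hdm : Measurable fun x => (exponentialPDFReal 1 x).toNNReal :=
    (measurable_exponentialPDFReal 1).real_toNNReal
  have hpdfco : exponentialPDF 1 = fun x => (((exponentialPDFReal 1 x).toNNReal : ℝ≥0) : ℝ≥0∞) := by
    funext x; rfl
  constructor
  · rw [hme, show exponentialPDF 1 = fun x => ENNReal.ofReal (exponentialPDFReal 1 x) from rfl]
    rw [integrable_withDensity_iff ((measurable_exponentialPDFReal 1).ennreal_ofReal)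
      (ae_of_all _ fun x => ENNReal.ofReal_lt_top)]
    refine hInd.congr (ae_of_all _ fun x => ?_)
    show _ = Real.exp (s * x) * (ENNReal.ofReal (exponentialPDFReal 1 x)).toReal
    rw [← hindfun x, ENNReal.toReal_ofReal (exponentialPDFReal_nonneg one_pos x)]
    ring
  · rw [hme, hpdfco, integral_withDensity_eq_integral_smul hdm]
    have heq : ∀ x : ℝ, ((exponentialPDFReal 1 x).toNNReal : ℝ≥0) • Real.exp (s * x)
        = Set.indicator (Ici (0:ℝ)) (fun x => Real.exp (-((1 - s) * x))) x := by
      intro x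
      rw [NNReal.smul_def, smul_eq_mul, Real.coe_toNNReal _ (exponentialPDFReal_nonneg one_pos x),
        hindfun x]
    rw [integral_congr_ae (ae_of_all _ heq), integral_indicator measurableSet_Ici,
      integral_Ici_eq_integral_Ioi]
    have h2 : (∫ x in Ioi (0:ℝ), Real.exp (-((1 - s) * x)))
        = (1 - s)⁻¹ • ∫ x in Ioi ((1-s) * 0), Real.exp (-x) := by
      exact integral_comp_mul_left_Ioi (fun x => Real.exp (-x)) 0 hb
    rw [h2]
    simp [integral_exp_neg_Ioi, integral_exp_Iic_zero]

lemma map_eq_expMeasure {Ω : Type*} [MeasurableSpace Ω] (P : Measure Ω)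
    [IsProbabilityMeasure P] (Z : Ω → ℝ) (hm : Measurable Z)
    (hcdf : ∀ t, (P {ω | Z ω ≤ t}).toReal = if 0 ≤ t then 1 - Real.exp (-t) else 0) :
    P.map Z = expMeasure 1 := by
  have hpm : IsProbabilityMeasure (P.map Z) := Measure.isProbabilityMeasure_map hm.aemeasurable
  refine MeasureTheory.Measure.ext_of_Iic _ _ (fun t => ?_)
  rw [Measure.map_apply hm measurableSet_Iic]
  have h1 : Z ⁻¹' Iic t = {ω | Z ω ≤ t} := rfl
  have h2 : expMeasure 1 (Iic t) = ENNReal.ofReal (if 0 ≤ t then 1 - Real.exp (-t) else 0) := by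
    rw [show expMeasure 1 = volume.withDensity (exponentialPDF 1) from rfl,
      withDensity_apply _ measurableSet_Iic, lintegral_exponentialPDF_eq_antiDeriv one_pos t]
    norm_num
  rw [h1, h2, ← hcdf t, ENNReal.ofReal_toReal (measure_ne_top P _)]

lemma mgf_exp {Ω : Type*} [MeasurableSpace Ω] (P : Measure Ω)
    [IsProbabilityMeasure P] (Z : Ω → ℝ) (hm : Measurable Z)
    (hcdf : ∀ t, (P {ω | Z ω ≤ t}).toReal = if 0 ≤ t then 1 - Real.exp (-t) else 0)
    {s : ℝ} (hs : s < 1) :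
    Integrable (fun ω => Real.exp (s * Z ω)) P ∧ mgf Z P s = (1 - s)⁻¹ := by
  have hmap := map_eq_expMeasure P Z hm hcdf
  have hmeasg : AEStronglyMeasurable (fun x => Real.exp (s * x)) (P.map Z) :=
    (Real.continuous_exp.comp (continuous_const.mul continuous_id)).aestronglyMeasurable
  constructor
  · have := (integrable_map_measure hmeasg hm.aemeasurable).mp (by rw [hmap]; exact (expMGF hs).1)
    exact this
  · rw [mgf, ← integral_map hm.aemeasurable hmeasg, hmap, (expMGF hs).2]

lemma scalar_ineq {astar abar ε : ℝ} (hε : 0 < ε) (h1 : ε < abar) (h2 : abar < astar) :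
    (1 - abar / astar) * Real.log ((astar - ε) / (astar - abar)) ≤
      (1 + abar / astar) * Real.log ((astar + abar) / (astar + ε)) := by
  have hastar : 0 < astar := by linarith
  set α := abar / astar with hα
  have hαval : α * astar = abar := by rw [hα]; exact div_mul_cancel₀ _ hastar.ne'
  set G : ℝ → ℝ := fun t => (1 + α) * Real.log (astar + t) + (1 - α) * Real.log (astar - t)
    with hG
  have hDeriv : ∀ t ∈ Set.Ioo (0:ℝ) abar,
      HasDerivAt G ((1 + α) * (1 / (astar + t)) + (1 - α) * (-1 / (astar - t))) t := by
    intro t ht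
    have hp : astar + t ≠ 0 := by nlinarith [ht.1, ht.2]
    have hq : astar - t ≠ 0 := by nlinarith [ht.1, ht.2]
    have d1 : HasDerivAt (fun t : ℝ => astar + t) 1 t := (hasDerivAt_id t).const_add astar
    have d2 : HasDerivAt (fun t : ℝ => astar - t) (-1) t := (hasDerivAt_id t).const_sub astar
    exact ((d1.log hp).const_mul (1 + α)).add ((d2.log hq).const_mul (1 - α))
  have hmono : MonotoneOn G (Set.Icc 0 abar) := by
    apply monotoneOn_of_deriv_nonneg (convex_Icc _ _)
    · apply ContinuousOn.add
      · exact continuousOn_const.mul (ContinuousOn.log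
          (continuous_const.add continuous_id).continuousOn
          (fun t ht => by nlinarith [ht.1, ht.2]))
      · exact continuousOn_const.mul (ContinuousOn.log
          (continuous_const.sub continuous_id).continuousOn
          (fun t ht => by nlinarith [ht.1, ht.2]))
    · intro t ht
      rw [interior_Icc] at ht
      exact (hDeriv t ht).differentiableAt.differentiableWithinAt
    · intro t ht
      rw [interior_Icc] at ht
      rw [(hDeriv t ht).deriv]
      have hα1 : α < 1 := by rw [hα]; exact (div_lt_one hastar).mpr h2
      have hα0 : 0 < α := div_pos (by linarith) hastar
      have hpt : 0 < astar + t := by nlinarith [ht.1, ht.2]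
      have hqt : 0 < astar - t := by nlinarith [ht.1, ht.2]
      have : (1 - α) / (astar - t) ≤ (1 + α) / (astar + t) := by
        rw [div_le_div_iff₀ hqt hpt]; nlinarith [hαval, ht.2]
      have e1 : (1 + α) * (1 / (astar + t)) = (1 + α) / (astar + t) := by ring
      have e2 : (1 - α) * (-1 / (astar - t)) = -((1 - α) / (astar - t)) := by ring
      rw [e1, e2]
      linarith
  have hmem1 : ε ∈ Set.Icc (0:ℝ) abar := ⟨hε.le, h1.le⟩
  have hmem2 : abar ∈ Set.Icc (0:ℝ) abar := ⟨by linarith, le_rfl⟩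
  have hGle : G ε ≤ G abar := hmono hmem1 hmem2 h1.le
  rw [hG] at hGle
  simp only at hGle
  have l1 : Real.log ((astar - ε) / (astar - abar))
      = Real.log (astar - ε) - Real.log (astar - abar) :=
    Real.log_div (by linarith) (by linarith)
  have l2 : Real.log ((astar + abar) / (astar + ε))
      = Real.log (astar + abar) - Real.log (astar + ε) :=
    Real.log_div (by linarith) (by linarith)
  rw [l1, l2]
  nlinarith [hGle]

lemma lam_alg1 {abar astar ε : ℝ} (hε : 0 < ε) (h1 : ε < abar) (h2 : abar < astar) :
    1 - (abar - ε) / (ε * (astar - ε)) * ε = (astar - abar) / (astar - ε) := by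
  have h3 : astar - ε ≠ 0 := by intro h; nlinarith
  field_simp
  ring

lemma lam_alg2 {abar astar ε : ℝ} (hε : 0 < ε) (h1 : ε < abar) (h2 : abar < astar) :
    1 - (abar - ε) / (ε * (astar - ε)) * (ε - astar) = abar / ε := by
  have h3 : astar - ε ≠ 0 := by intro h; nlinarith
  field_simp
  ring

lemma R_alg {abar astar ε : ℝ} (hε : 0 < ε) (h1 : 0 < abar) (h2 : 0 < astar) :
    (1 / (abar / astar) + 1) / (1 / (abar / astar) + ε / abar)
      = (astar + abar) / (astar + ε) := by
  have h3 : astar + ε ≠ 0 := by positivity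
  have h4 : astar / abar + ε / abar ≠ 0 := by positivity
  rw [one_div_div]
  field_simp

/-- `h_α(x) = x^α ((1/α + 1)/(1/α + x))^{α+1}` (real powers). -/
noncomputable def hfun (α x : ℝ) : ℝ := x ^ α * ((1 / α + 1) / (1 / α + x)) ^ (α + 1)

theorem stmt19 {Ω : Type*} [MeasurableSpace Ω] (P : Measure Ω)
    [IsProbabilityMeasure P]
    (X : ℕ → Ω → ℝ) (hmeas : ∀ i, Measurable (X i))
    (hindep : iIndepFun X P)
    (hexp : ∀ i t, (P {ω | X i ω ≤ t}).toReal = if 0 ≤ t then 1 - Real.exp (-t) else 0)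
    (l : ℕ) (hl : 1 ≤ l) (a : ℕ → ℝ) (ha : ∀ i, 1 ≤ i → i ≤ l → 0 ≤ a i)
    (hastar : 0 < (Finset.Icc 1 l).sup' (Finset.nonempty_Icc.mpr hl) a)
    (ε : ℝ) (hε0 : 0 ≤ ε) (hεa : ε ≤ (∑ i ∈ Finset.Icc 1 l, a i) / (l : ℝ)) :
    (P {ω | 0 ≤ ∑ i ∈ Finset.Icc 1 l, (ε - a i) * X i ω}).toReal ≤
      (hfun (((∑ i ∈ Finset.Icc 1 l, a i) / (l : ℝ)) /
          ((Finset.Icc 1 l).sup' (Finset.nonempty_Icc.mpr hl) a))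
        (ε / ((∑ i ∈ Finset.Icc 1 l, a i) / (l : ℝ)))) ^ l := by
  classical
  set T := Finset.Icc 1 l with hT
  set astar := T.sup' (Finset.nonempty_Icc.mpr hl) a with hastar_def
  set abar := (∑ i ∈ T, a i) / (l : ℝ) with habar_def
  set α := abar / astar with hα_def
  have hl0 : (0:ℝ) < l := by exact_mod_cast lt_of_lt_of_le one_pos hl
  have hTcard : T.card = l := by rw [hT, Nat.card_Icc]; omega
  have hanonneg : ∀ i ∈ T, 0 ≤ a i := fun i hi => by
    obtain ⟨h1, h2⟩ := Finset.mem_Icc.mp (hT ▸ hi); exact ha i h1 h2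
  have hale : ∀ i ∈ T, a i ≤ astar := fun i hi => Finset.le_sup' a hi
  obtain ⟨istar, histar, hista⟩ := Finset.exists_mem_eq_sup' (Finset.nonempty_Icc.mpr hl) a
  have hsum_pos : 0 < ∑ i ∈ T, a i :=
    Finset.sum_pos' hanonneg ⟨istar, histar, by rw [← hista]; exact hastar⟩
  have habar_pos : 0 < abar := div_pos hsum_pos hl0
  have hsum_eq : ∑ i ∈ T, a i = (l:ℝ) * abar := by
    rw [habar_def]; field_simp
  have habar_le : abar ≤ astar := by
    rw [habar_def, div_le_iff₀ hl0]
    calc ∑ i ∈ T, a i ≤ ∑ _i ∈ T, astar := Finset.sum_le_sum hale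
      _ = astar * l := by rw [Finset.sum_const, hTcard, nsmul_eq_mul, mul_comm]
  have hα_pos : 0 < α := div_pos habar_pos hastar
  have hα_le1 : α ≤ 1 := (div_le_one hastar).mpr habar_le
  have hRHS_nonneg : 0 ≤ (hfun α (ε / abar)) ^ l := by
    apply pow_nonneg
    apply mul_nonneg (Real.rpow_nonneg (div_nonneg hε0 habar_pos.le) _)
    apply Real.rpow_nonneg
    apply div_nonneg
    · positivity
    · have : 0 ≤ ε / abar := div_nonneg hε0 habar_pos.le
      positivity
  rcases eq_or_lt_of_le hεa with heq | hltbar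
  · -- ε = abar
    have hx : ε / abar = 1 := by rw [heq]; exact div_self habar_pos.ne'
    have hyp : hfun α 1 = 1 := by
      have h0 : (0:ℝ) < 1 / α + 1 := by positivity
      rw [hfun, Real.one_rpow, div_self h0.ne', Real.one_rpow, mul_one]
    rw [hx, hyp, one_pow]
    calc (P _).toReal ≤ (P Set.univ).toReal :=
          ENNReal.toReal_mono (measure_ne_top _ _) (measure_mono (Set.subset_univ _))
      _ = 1 := by simp
  -- now ε < abar
  by_cases hmain : 0 < ε ∧ abar < astar
  case neg =>
    -- null case: show the probability is zero
    have hεlea : ∀ i ∈ T, ε ≤ a i := by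
      intro i hi
      rcases not_and_or.mp hmain with h | h
      · have : ε = 0 := le_antisymm (not_lt.mp h) hε0
        rw [this]; exact hanonneg i hi
      · have heqs : abar = astar := le_antisymm habar_le (not_lt.mp h)
        have hall : a i = astar := by
          by_contra hne
          have hstrict : ∑ j ∈ T, a j < ∑ _j ∈ T, astar :=
            Finset.sum_lt_sum hale ⟨i, hi, lt_of_le_of_ne (hale i hi) hne⟩
          rw [Finset.sum_const, hTcard, nsmul_eq_mul, hsum_eq, heqs] at hstrict
          linarith
        rw [hall, ← heqs]; exact hltbar.le
    have hεltstar : ε < astar := lt_of_lt_of_le hltbar habar_le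
    have hnull1 : ∀ i, P {ω | X i ω < 0} = 0 := by
      intro i
      have hcover : {ω | X i ω < 0} ⊆ ⋃ n : ℕ, {ω | X i ω ≤ -(1 / (n + 1))} := by
        intro ω hω
        simp only [Set.mem_setOf_eq] at hω
        obtain ⟨n, hn⟩ := exists_nat_gt (1 / (-(X i ω)))
        refine Set.mem_iUnion.mpr ⟨n, ?_⟩
        simp only [Set.mem_setOf_eq]
        have hx : 0 < -(X i ω) := by linarith
        rw [div_lt_iff₀ hx] at hn
        have hn1 : (0:ℝ) < (n:ℝ) + 1 := by positivity
        rw [le_neg, div_le_iff₀ hn1]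
        nlinarith [hx]
      refine measure_mono_null hcover (measure_iUnion_null fun n => ?_)
      have h := hexp i (-(1 / (n + 1)))
      have hneg : -(1 / ((n:ℝ) + 1)) < 0 := by
        have : (0:ℝ) < 1 / ((n:ℝ) + 1) := by positivity
        linarith
      rw [if_neg (not_le.mpr hneg)] at h
      rcases (ENNReal.toReal_eq_zero_iff _).mp h with h0 | htop
      · exact h0
      · exact absurd htop (measure_ne_top P _)
    have hnullstar : P {ω | X istar ω ≤ 0} = 0 := by
      have h := hexp istar 0
      rw [if_pos le_rfl] at h
      simp only [neg_zero, Real.exp_zero, sub_self] at h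
      rcases (ENNReal.toReal_eq_zero_iff _).mp h with h0 | htop
      · exact h0
      · exact absurd htop (measure_ne_top P _)
    have hsub : {ω | 0 ≤ ∑ i ∈ T, (ε - a i) * X i ω} ⊆
        {ω | X istar ω ≤ 0} ∪ ⋃ i ∈ T, {ω | X i ω < 0} := by
      intro ω hω
      simp only [Set.mem_setOf_eq] at hω
      by_contra hc
      simp only [Set.mem_union, Set.mem_iUnion, Set.mem_setOf_eq, not_or, not_exists,
        not_lt, not_le] at hc
      obtain ⟨hstar, hnonneg⟩ := hc
      have hlt : ∑ i ∈ T, (ε - a i) * X i ω < ∑ _i ∈ T, (0:ℝ) := by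
        refine Finset.sum_lt_sum (fun i hi => ?_) ⟨istar, histar, ?_⟩
        · exact mul_nonpos_iff.mpr (Or.inr ⟨by linarith [hεlea i hi], hnonneg i hi⟩)
        · have haistar : astar = a istar := hista
          exact mul_neg_of_neg_of_pos (by linarith) hstar
      rw [Finset.sum_const, smul_zero] at hlt
      linarith
    have hzero : P {ω | 0 ≤ ∑ i ∈ T, (ε - a i) * X i ω} = 0 := by
      refine measure_mono_null hsub (measure_union_null hnullstar ?_)
      exact (measure_biUnion_null_iff T.countable_toSet).mpr fun i _ => hnull1 i
    rw [hzero]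
    simpa using hRHS_nonneg
  case pos =>
    obtain ⟨hεpos, hstrict⟩ := hmain
    have hεstar : ε < astar := lt_trans hltbar hstrict
    set lam := (abar - ε) / (ε * (astar - ε)) with hlam_def
    have hlam_pos : 0 < lam := div_pos (by linarith) (mul_pos hεpos (by linarith))
    have h1mlamε : 1 - lam * ε = (astar - abar) / (astar - ε) :=
      lam_alg1 hεpos hltbar hstrict
    have h1mlamstar : 1 - lam * (ε - astar) = abar / ε :=
      lam_alg2 hεpos hltbar hstrict
    have hp : (0:ℝ) < 1 - lam * ε := by
      rw [h1mlamε]; apply div_pos <;> linarith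
    have hq : (0:ℝ) < 1 - lam * (ε - astar) := by
      rw [h1mlamstar]; exact div_pos habar_pos hεpos
    have hsi_lt : ∀ i ∈ T, lam * (ε - a i) < 1 := by
      intro i hi
      have h1 : lam * (ε - a i) ≤ lam * ε := by
        have := hanonneg i hi
        nlinarith
      linarith
    -- the transformed variables
    set Y : ℕ → Ω → ℝ := fun i ω => (ε - a i) * X i ω with hY
    have hYmeas : ∀ i, Measurable (Y i) := fun i => (hmeas i).const_mul _
    have hYindep : iIndepFun Y P :=
      hindep.comp (fun i x => (ε - a i) * x) (fun i => measurable_id.const_mul _)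
    have hYint : ∀ i ∈ T, Integrable (fun ω => Real.exp (lam * Y i ω)) P := by
      intro i hi
      have h := (mgf_exp P (X i) (hmeas i) (hexp i) (hsi_lt i hi)).1
      refine h.congr (ae_of_all _ fun ω => ?_)
      simp only [hY, mul_assoc]
    have hSint : Integrable (fun ω => Real.exp (lam * (∑ i ∈ T, Y i) ω)) P :=
      hYindep.integrable_exp_mul_sum hYmeas hYint
    have hmarkov := measure_ge_le_exp_mul_mgf (X := ∑ i ∈ T, Y i) (μ := P) (t := lam)
      0 hlam_pos.le hSint
    have hset : {ω | 0 ≤ ∑ i ∈ T, (ε - a i) * X i ω} = {ω | (0:ℝ) ≤ (∑ i ∈ T, Y i) ω} := by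
      ext ω
      simp [hY, Finset.sum_apply]
    set A := (astar - ε) / (astar - abar) with hA_def
    set B := ε / abar with hB_def
    have hApos : 0 < A := by apply div_pos <;> linarith
    have hBpos : 0 < B := div_pos hεpos habar_pos
    have hperi : ∀ i ∈ T, (1 - lam * (ε - a i))⁻¹ ≤ A ^ (1 - a i / astar) * B ^ (a i / astar) := by
      intro i hi
      set θ := a i / astar with hθ_def
      have hθ0 : 0 ≤ θ := div_nonneg (hanonneg i hi) hastar.le
      have hθ1 : θ ≤ 1 := (div_le_one hastar).mpr (hale i hi)
      have hθa : θ * astar = a i := div_mul_cancel₀ _ hastar.ne'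
      have hconv : 1 - lam * (ε - a i) =
          (1 - θ) * (1 - lam * ε) + θ * (1 - lam * (ε - astar)) := by
        rw [← hθa]; ring
      have hgm := Real.geom_mean_le_arith_mean2_weighted (by linarith : (0:ℝ) ≤ 1 - θ) hθ0
        hp.le hq.le (by ring : (1 - θ) + θ = 1)
      have hgmpos : 0 < (1 - lam * ε) ^ (1 - θ) * (1 - lam * (ε - astar)) ^ θ :=
        mul_pos (Real.rpow_pos_of_pos hp _) (Real.rpow_pos_of_pos hq _)
      have hinv : (1 - lam * (ε - a i))⁻¹ ≤
          ((1 - lam * ε) ^ (1 - θ) * (1 - lam * (ε - astar)) ^ θ)⁻¹ := by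
        apply inv_anti₀ hgmpos
        rw [hconv]; exact hgm
      refine hinv.trans_eq ?_
      rw [mul_inv, ← Real.inv_rpow hp.le, ← Real.inv_rpow hq.le]
      congr 2
      · rw [h1mlamε, inv_div]
      · rw [h1mlamstar, inv_div]
    have hsumθ : ∑ i ∈ T, a i / astar = (l:ℝ) * α := by
      rw [← Finset.sum_div, hsum_eq, hα_def, mul_div_assoc]
    have hsum1θ : ∑ i ∈ T, (1 - a i / astar) = (l:ℝ) * (1 - α) := by
      rw [Finset.sum_sub_distrib, Finset.sum_const, hTcard, hsumθ, nsmul_eq_mul, mul_one]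
      ring
    have hR : (1 / α + 1) / (1 / α + ε / abar) = (astar + abar) / (astar + ε) :=
      R_alg hεpos habar_pos hastar
    have hRpos : 0 < (astar + abar) / (astar + ε) := by apply div_pos <;> linarith
    -- the final comparison
    have hfinal : A ^ ((l:ℝ) * (1 - α)) * B ^ ((l:ℝ) * α) ≤ (hfun α (ε / abar)) ^ l := by
      have hexp_rhs : (hfun α (ε / abar)) ^ l =
          B ^ (α * (l:ℝ)) * ((astar + abar) / (astar + ε)) ^ ((α + 1) * (l:ℝ)) := by
        rw [hfun, hR, mul_pow, ← Real.rpow_natCast (B ^ α) l, ← Real.rpow_natCast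
          (((astar + abar) / (astar + ε)) ^ (α + 1)) l,
          ← Real.rpow_mul hBpos.le, ← Real.rpow_mul hRpos.le]
      have hAR : A ^ ((l:ℝ) * (1 - α)) ≤
          ((astar + abar) / (astar + ε)) ^ ((α + 1) * (l:ℝ)) := by
        rw [Real.rpow_def_of_pos hApos, Real.rpow_def_of_pos hRpos]
        apply Real.exp_le_exp.mpr
        have hsc := scalar_ineq hεpos hltbar hstrict
        rw [← hα_def, ← hA_def] at hsc
        have hmul := mul_le_mul_of_nonneg_left hsc hl0.le
        have e1 : Real.log A * ((l:ℝ) * (1 - α)) = (l:ℝ) * ((1 - α) * Real.log A) := by ring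
        have e2 : Real.log ((astar + abar) / (astar + ε)) * ((α + 1) * (l:ℝ))
            = (l:ℝ) * ((1 + α) * Real.log ((astar + abar) / (astar + ε))) := by ring
        rw [e1, e2]
        exact hmul
      rw [hexp_rhs, show (l:ℝ) * α = α * (l:ℝ) from mul_comm _ _,
        mul_comm (A ^ ((l:ℝ) * (1 - α))) (B ^ (α * (l:ℝ)))]
      exact mul_le_mul_of_nonneg_left hAR (Real.rpow_nonneg hBpos.le _)
    calc (P {ω | 0 ≤ ∑ i ∈ T, (ε - a i) * X i ω}).toReal
        ≤ Real.exp (-lam * 0) * mgf (∑ i ∈ T, Y i) P lam := by rw [hset]; exact hmarkov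
      _ = mgf (∑ i ∈ T, Y i) P lam := by simp
      _ = ∏ i ∈ T, mgf (Y i) P lam := hYindep.mgf_sum hYmeas T
      _ = ∏ i ∈ T, (1 - lam * (ε - a i))⁻¹ := by
          refine Finset.prod_congr rfl fun i hi => ?_
          have h1 : mgf (Y i) P lam = mgf (X i) P (lam * (ε - a i)) := by
            simp only [mgf, hY, ← mul_assoc]
          rw [h1, (mgf_exp P (X i) (hmeas i) (hexp i) (hsi_lt i hi)).2]
      _ ≤ ∏ i ∈ T, (A ^ (1 - a i / astar) * B ^ (a i / astar)) := by
          refine Finset.prod_le_prod (fun i hi => ?_) hperi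
          have : 0 < 1 - lam * (ε - a i) := by linarith [hsi_lt i hi]
          positivity
      _ = A ^ ((l:ℝ) * (1 - α)) * B ^ ((l:ℝ) * α) := by
          rw [Finset.prod_mul_distrib, prod_rpow_sum hApos, prod_rpow_sum hBpos,
            hsumθ, hsum1θ]
      _ ≤ (hfun α (ε / abar)) ^ l := hfinal
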